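/- With E_st = ω₀(γ e^{-β₀ω₀} + 2Ω²Δt)/(γ(1+e^{-β₀ω₀}) + 4Ω²Δt) and β(E) = -(1/ω₀) ln(E/(ω₀ - E)), one has β(E_st) = β₀ - (1/ω₀) ln((1 + (2Ω²Δt/γ)e^{β₀ω₀})/(1 + 2Ω²Δt/γ)), for γ > 0, ω₀ > 0, Ω²Δt ≥ 0. -/

import Mathlib

open Real

/-- The stationary inverse temperature measured by a driven two-level probe:
`β(E_st) = β₀ - (1/ω₀) ln((1 + (2Ω²Δt/γ)e^{β₀ω₀})/(1 + 2Ω²Δt/γ))`. -/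
theorem stationary_inverse_temperature
    (γ ω₀ β₀ Ω Δt : ℝ) (hγ : 0 < γ) (hω₀ : 0 < ω₀) (hΩΔt : 0 ≤ Ω ^ 2 * Δt)
    (Est : ℝ)
    (hEst : Est = ω₀ * (γ * exp (-β₀ * ω₀) + 2 * Ω ^ 2 * Δt) /
      (γ * (1 + exp (-β₀ * ω₀)) + 4 * Ω ^ 2 * Δt)) :
    -(1 / ω₀) * log (Est / (ω₀ - Est))
      = β₀ - (1 / ω₀) *
        log ((1 + (2 * Ω ^ 2 * Δt / γ) * exp (β₀ * ω₀)) /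
          (1 + 2 * Ω ^ 2 * Δt / γ)) := by
  set a := Ω ^ 2 * Δt with ha
  set e := exp (-β₀ * ω₀) with he
  have hepos : 0 < e := exp_pos _
  have hE : exp (β₀ * ω₀) = e⁻¹ := by
    rw [he, ← exp_neg]; ring_nf
  have hNum : 0 < γ * e + 2 * a := by positivity
  have hDen : 0 < γ * (1 + e) + 4 * a := by positivity
  have hγa : 0 < γ + 2 * a := by positivity
  have hr : 0 < (1 + (2 * a / γ) * exp (β₀ * ω₀)) / (1 + 2 * a / γ) := by
    have h1 : 0 < 1 + (2 * a / γ) * exp (β₀ * ω₀) := by positivity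
    have h2 : 0 < 1 + 2 * a / γ := by positivity
    positivity
  have h2a : (2:ℝ) * Ω ^ 2 * Δt = 2 * a := by rw [ha]; ring
  have h4a : (4:ℝ) * Ω ^ 2 * Δt = 4 * a := by rw [ha]; ring
  rw [h2a, h4a] at hEst
  have key : Est / (ω₀ - Est)
      = e * ((1 + (2 * a / γ) * exp (β₀ * ω₀)) / (1 + 2 * a / γ)) := by
    have hsub : ω₀ - Est = ω₀ * (γ + 2 * a) / (γ * (1 + e) + 4 * a) := by
      rw [hEst, eq_div_iff hDen.ne', sub_mul, div_mul_cancel₀ _ hDen.ne']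
      ring
    rw [hsub, hEst, hE]
    rw [div_div_div_eq, mul_div_assoc']
    rw [div_eq_div_iff (by positivity) (by positivity)]
    field_simp
  rw [key, log_mul (ne_of_gt hepos) (ne_of_gt hr), he, log_exp]
  field_simp
  rw [ha]
  ring_nf
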